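/- Let ν be a finite measure on a measurable space K, and for each pair i, j ∈ ℕ let γ_{ij} be a finite signed measure on K with γ_{ij} ≪ ν and γ_{ij} = γ_{ji}, such that for every finitely supported a : ℕ → ℝ the signed measure Σ_{i,j} a_i a_j γ_{ij} is nonnegative (i.e., a measure). Then there exist measurable functions Z^{i,j} : K → ℝ such that each Z^{i,j} is a version of the Radon–Nikodym derivative dγ_{ij}/dν, and such that for every x ∈ K (not merely ν-a.e.) the following hold: |Z^{i,j}(x)| ≤ √(Z^{i,i}(x))·√(Z^{j,j}(x)) for all i, j, and for every N the matrix (Z^{i,j}(x))_{i,j<N} is symmetric and positive semidefinite. -/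

import Mathlib

open MeasureTheory

/-- Two-point evaluation of a quadratic form. -/
lemma twoPoint {n : ℕ} (p q : Fin n) (hpq : p ≠ q) (c : Fin n → Fin n → ℝ) (t s : ℝ) :
    ∑ k : Fin n, ∑ l : Fin n,
      (if k = p then t else if k = q then s else 0) *
      (if l = p then t else if l = q then s else 0) * c k l
      = t * t * c p p + t * s * c p q + s * t * c q p + s * s * c q q := by
  classical
  set v : Fin n → ℝ := fun k => if k = p then t else if k = q then s else 0 with hv
  have hv0 : ∀ k, k ∉ ({p, q} : Finset (Fin n)) → v k = 0 := by
    intro k hk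
    simp only [Finset.mem_insert, Finset.mem_singleton, not_or] at hk
    simp [hv, hk.1, hk.2]
  have outer : ∀ g : Fin n → ℝ, (∀ k, k ∉ ({p, q} : Finset (Fin n)) → g k = 0) →
      ∑ k : Fin n, g k = g p + g q := by
    intro g hg
    rw [← Finset.sum_subset (Finset.subset_univ {p, q}) (fun x _ hx => hg x hx),
      Finset.sum_pair hpq]
  rw [outer _ (fun k hk => by
      have : ∀ l : Fin n, v k * v l * c k l = 0 := fun l => by rw [hv0 k hk]; ring
      exact Finset.sum_eq_zero (fun l _ => this l)),
    outer (fun l => v p * v l * c p l) (fun l hl => by show v p * v l * c p l = 0; rw [hv0 l hl]; ring),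
    outer (fun l => v q * v l * c q l) (fun l hl => by show v q * v l * c q l = 0; rw [hv0 l hl]; ring)]
  have hvp : v p = t := by simp [hv]
  have hvq : v q = s := by simp [hv, hpq.symm]
  rw [hvp, hvq]; ring

/-- One-point evaluation of a quadratic form. -/
lemma onePoint {n : ℕ} (p : Fin n) (c : Fin n → Fin n → ℝ) :
    ∑ k : Fin n, ∑ l : Fin n,
      (if k = p then (1 : ℝ) else 0) * (if l = p then (1 : ℝ) else 0) * c k l = c p p := by
  classical
  have : ∀ k : Fin n, ∑ l : Fin n,
      (if k = p then (1 : ℝ) else 0) * (if l = p then (1 : ℝ) else 0) * c k l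
      = if k = p then c k p else 0 := by
    intro k
    by_cases hk : k = p <;> simp [hk, mul_ite, ite_mul, Finset.sum_ite_eq']
  rw [Finset.sum_congr rfl fun k _ => this k]
  simp

/-- Quadratic forms nonnegative on rational vectors are nonnegative on real vectors. -/
lemma quadFin {n : ℕ} (c : Fin n → Fin n → ℝ)
    (h : ∀ a : Fin n → ℚ, 0 ≤ ∑ i : Fin n, ∑ j : Fin n, (a i : ℝ) * (a j : ℝ) * c i j) :
    ∀ v : Fin n → ℝ, 0 ≤ ∑ i : Fin n, ∑ j : Fin n, v i * v j * c i j := by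
  intro v
  set Q : (Fin n → ℝ) → ℝ := fun w => ∑ i : Fin n, ∑ j : Fin n, w i * w j * c i j with hQ
  have hc : Continuous Q := by
    apply continuous_finset_sum; intro i _
    apply continuous_finset_sum; intro j _
    exact ((continuous_apply i).mul (continuous_apply j)).mul continuous_const
  have hclosed : IsClosed {w : Fin n → ℝ | 0 ≤ Q w} := isClosed_le continuous_const hc
  have hrange : Set.range (fun a : Fin n → ℚ => fun i => (a i : ℝ))
      = Set.pi Set.univ (fun _ : Fin n => Set.range ((↑) : ℚ → ℝ)) := by
    ext w
    constructor
    · rintro ⟨a, rfl⟩ i _; exact ⟨a i, rfl⟩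
    · intro hw
      choose a ha using fun i => hw i (Set.mem_univ i)
      exact ⟨a, funext ha⟩
  have hdense : Dense (Set.range (fun a : Fin n → ℚ => fun i => (a i : ℝ))) := by
    rw [hrange]
    exact dense_pi Set.univ (fun i _ => Rat.denseRange_cast (𝕜 := ℝ))
  have hsub : Set.range (fun a : Fin n → ℚ => fun i => (a i : ℝ)) ⊆ {w | 0 ≤ Q w} := by
    rintro _ ⟨a, rfl⟩; exact h a
  exact hclosed.closure_subset_iff.mpr hsub (hdense v)

set_option maxHeartbeats 2000000 in
theorem stmt7 {K : Type*} [MeasurableSpace K] (ν : Measure K) [IsFiniteMeasure ν]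
    (γ : ℕ → ℕ → SignedMeasure K)
    (hac : ∀ (i j : ℕ) (B : Set K), MeasurableSet B → ν B = 0 → γ i j B = 0)
    (hsymm : ∀ i j, γ i j = γ j i)
    (hpos : ∀ (n : ℕ) (a : ℕ → ℝ) (B : Set K), MeasurableSet B →
      0 ≤ ∑ i ∈ Finset.range n, ∑ j ∈ Finset.range n, a i * a j * γ i j B) :
    ∃ Z : ℕ → ℕ → K → ℝ,
      (∀ i j, Measurable (Z i j)) ∧
      (∀ i j, Integrable (Z i j) ν) ∧
      (∀ (i j : ℕ) (B : Set K), MeasurableSet B → γ i j B = ∫ x in B, Z i j x ∂ν) ∧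
      (∀ (x : K) (i j : ℕ), |Z i j x| ≤ Real.sqrt (Z i i x) * Real.sqrt (Z j j x)) ∧
      (∀ (x : K) (N : ℕ), (Matrix.of fun i j : Fin N => Z i j x).PosSemidef) := by
  classical
  -- symmetrized densities, made opaque
  obtain ⟨f, hfmeas, hfint, hfsymm, hdens⟩ :
      ∃ f : ℕ → ℕ → K → ℝ, (∀ i j, Measurable (f i j)) ∧ (∀ i j, Integrable (f i j) ν) ∧
        (∀ i j, f i j = f j i) ∧
        (∀ (i j : ℕ) (B : Set K), MeasurableSet B → γ i j B = ∫ x in B, f i j x ∂ν) := by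
    refine ⟨fun i j => SignedMeasure.rnDeriv (γ (min i j) (max i j)) ν,
      fun i j => SignedMeasure.measurable_rnDeriv _ _,
      fun i j => SignedMeasure.integrable_rnDeriv _ _,
      fun i j => by simp only [min_comm, max_comm], ?_⟩
    have hγmm : ∀ i j, γ (min i j) (max i j) = γ i j := by
      intro i j
      rcases le_total i j with h | h
      · rw [min_eq_left h, max_eq_right h]
      · rw [min_eq_right h, max_eq_left h, hsymm]
    intro i j B hB
    have hac' : γ (min i j) (max i j) ≪ᵥ ν.toENNRealVectorMeasure := by
      refine VectorMeasure.AbsolutelyContinuous.mk fun s hs h0 => ?_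
      rw [Measure.toENNRealVectorMeasure_apply_measurable hs] at h0
      exact hac _ _ s hs h0
    have h1 := (SignedMeasure.absolutelyContinuous_iff_withDensityᵥ_rnDeriv_eq _ ν).mp hac'
    calc γ i j B = γ (min i j) (max i j) B := by rw [hγmm]
    _ = ν.withDensityᵥ (SignedMeasure.rnDeriv (γ (min i j) (max i j)) ν) B := by rw [h1]
    _ = ∫ x in B, SignedMeasure.rnDeriv (γ (min i j) (max i j)) ν x ∂ν :=
      withDensityᵥ_apply (SignedMeasure.integrable_rnDeriv _ _) hB
  -- the good set
  set G : Set K := {x | ∀ (n : ℕ) (a : Fin n → ℚ),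
      0 ≤ ∑ i : Fin n, ∑ j : Fin n, (a i : ℝ) * (a j : ℝ) * f i j x} with hG
  have hGm : MeasurableSet G := by
    have : G = ⋂ (n : ℕ), ⋂ (a : Fin n → ℚ),
        {x | 0 ≤ ∑ i : Fin n, ∑ j : Fin n, (a i : ℝ) * (a j : ℝ) * f i j x} := by
      ext x; simp [hG]
    rw [this]
    refine MeasurableSet.iInter fun n => MeasurableSet.iInter fun a => ?_
    refine measurableSet_le measurable_const ?_
    exact Finset.measurable_sum _ fun i _ =>
      Finset.measurable_sum _ fun j _ => (hfmeas i j).const_mul _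
  -- the complement of the good set is null
  have hGnull : ν Gᶜ = 0 := by
    have hae : ∀ (n : ℕ) (a : Fin n → ℚ),
        ν {x | ¬ 0 ≤ ∑ i : Fin n, ∑ j : Fin n, (a i : ℝ) * (a j : ℝ) * f i j x} = 0 := by
      intro n a
      have hint : Integrable (fun x => ∑ i : Fin n, ∑ j : Fin n,
          (a i : ℝ) * (a j : ℝ) * f i j x) ν :=
        integrable_finset_sum _ fun (i : Fin n) _ => integrable_finset_sum _ fun (j : Fin n) _ =>
          ((hfint (i : ℕ) (j : ℕ)).const_mul _)
      have hnn : 0 ≤ᵐ[ν] fun x => ∑ i : Fin n, ∑ j : Fin n,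
          (a i : ℝ) * (a j : ℝ) * f i j x := by
        refine ae_nonneg_of_forall_setIntegral_nonneg hint fun B hB _ => ?_
        have e0 : (∫ x in B, ∑ i : Fin n, ∑ j : Fin n,
            (a i : ℝ) * (a j : ℝ) * f (i : ℕ) (j : ℕ) x ∂ν)
            = ∑ i : Fin n, ∑ j : Fin n, (a i : ℝ) * (a j : ℝ) * γ (i : ℕ) (j : ℕ) B := by
          calc (∫ x in B, ∑ i : Fin n, ∑ j : Fin n,
              (a i : ℝ) * (a j : ℝ) * f (i : ℕ) (j : ℕ) x ∂ν)
              = ∑ i : Fin n, ∫ x in B, ∑ j : Fin n,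
                (a i : ℝ) * (a j : ℝ) * f (i : ℕ) (j : ℕ) x ∂ν :=
              integral_finset_sum _ (fun (i : Fin n) _ =>
                (integrable_finset_sum _ fun (j : Fin n) _ =>
                ((hfint i j).const_mul _)).restrict)
            _ = ∑ i : Fin n, ∑ j : Fin n, ∫ x in B,
                (a i : ℝ) * (a j : ℝ) * f (i : ℕ) (j : ℕ) x ∂ν :=
              Finset.sum_congr rfl fun i _ =>
                integral_finset_sum _ (fun (j : Fin n) _ =>
                  ((hfint (i : ℕ) (j : ℕ)).const_mul _).restrict)
            _ = ∑ i : Fin n, ∑ j : Fin n, (a i : ℝ) * (a j : ℝ) * γ (i : ℕ) (j : ℕ) B := by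
              refine Finset.sum_congr rfl fun i _ => Finset.sum_congr rfl fun j _ => ?_
              rw [integral_const_mul, hdens (i : ℕ) (j : ℕ) B hB]
        rw [e0]
        -- compare with hpos
        set a' : ℕ → ℝ := fun k => if h : k < n then (a ⟨k, h⟩ : ℝ) else 0 with ha'
        have hp := hpos n a' B hB
        have e1 : ∑ i ∈ Finset.range n, ∑ j ∈ Finset.range n, a' i * a' j * γ i j B
            = ∑ i : Fin n, ∑ j : Fin n, (a i : ℝ) * (a j : ℝ) * γ (i : ℕ) (j : ℕ) B := by
          rw [← Fin.sum_univ_eq_sum_range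
            (fun i => ∑ j ∈ Finset.range n, a' i * a' j * γ i j B) n]
          refine Finset.sum_congr rfl fun i _ => ?_
          rw [← Fin.sum_univ_eq_sum_range (fun j => a' (i : ℕ) * a' j * γ (i : ℕ) j B) n]
          refine Finset.sum_congr rfl fun j _ => ?_
          simp [ha', i.isLt, j.isLt]
        rw [e1] at hp
        exact hp
      rw [Filter.EventuallyLE] at hnn
      rw [ae_iff] at hnn
      simpa using hnn
    have hsub : Gᶜ ⊆ ⋃ (n : ℕ), ⋃ (a : Fin n → ℚ),
        {x | ¬ 0 ≤ ∑ i : Fin n, ∑ j : Fin n, (a i : ℝ) * (a j : ℝ) * f i j x} := by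
      intro x hx
      simp only [hG, Set.mem_compl_iff, Set.mem_setOf_eq, not_forall] at hx
      obtain ⟨n, a, hna⟩ := hx
      exact Set.mem_iUnion.mpr ⟨n, Set.mem_iUnion.mpr ⟨a, hna⟩⟩
    refine measure_mono_null hsub ?_
    exact measure_iUnion_null fun n => measure_iUnion_null fun a => hae n a
  -- define Z
  set Z : ℕ → ℕ → K → ℝ := fun i j => G.indicator (f i j) with hZ
  have hZae : ∀ i j, Z i j =ᵐ[ν] f i j := by
    intro i j
    filter_upwards [measure_eq_zero_iff_ae_notMem.mp hGnull] with x hx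
    simp [hZ, Set.indicator_of_mem (Set.not_notMem.mp hx)]
  have hZmeas : ∀ i j, Measurable (Z i j) := fun i j => (hfmeas i j).indicator hGm
  have hZint : ∀ i j, Integrable (Z i j) ν := fun i j => (hfint i j).congr (hZae i j).symm
  -- the key pointwise quadratic positivity
  have hquad : ∀ (x : K) (n : ℕ) (v : Fin n → ℝ),
      0 ≤ ∑ i : Fin n, ∑ j : Fin n, v i * v j * Z (i : ℕ) (j : ℕ) x := by
    intro x n v
    by_cases hx : x ∈ G
    · simp only [hZ, Set.indicator_of_mem hx]
      exact quadFin (fun i j => f (i : ℕ) (j : ℕ) x) (fun a => hx n a) v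
    · simp [hZ, Set.indicator_of_notMem hx]
  have hZsymm : ∀ (i j : ℕ) (x : K), Z i j x = Z j i x := by
    intro i j x; simp only [hZ, hfsymm i j]
  have hZdiag : ∀ (x : K) (i : ℕ), 0 ≤ Z i i x := by
    intro x i
    have h := hquad x (i + 1) (fun k => if k = Fin.last i then (1 : ℝ) else 0)
    rwa [onePoint (Fin.last i) (fun k l => Z (k : ℕ) (l : ℕ) x), Fin.val_last] at h
  refine ⟨Z, hZmeas, hZint, ?_, ?_, ?_⟩
  · intro i j B hB
    rw [hdens i j B hB]
    exact integral_congr_ae (ae_restrict_of_ae (hZae i j).symm)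
  · -- Cauchy-Schwarz
    intro x i j
    by_cases hij : i = j
    · subst hij
      rw [abs_of_nonneg (hZdiag x i)]
      exact le_of_eq (Real.mul_self_sqrt (hZdiag x i)).symm
    · -- use the two-point quadratic
      have hmi : i < max i j + 1 := lt_of_le_of_lt (le_max_left i j) (Nat.lt_succ_self _)
      have hmj : j < max i j + 1 := lt_of_le_of_lt (le_max_right i j) (Nat.lt_succ_self _)
      set p : Fin (max i j + 1) := ⟨i, hmi⟩
      set q : Fin (max i j + 1) := ⟨j, hmj⟩
      have hpq : p ≠ q := fun h => hij (by simpa [p, q] using congrArg Fin.val h)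
      have key : ∀ t : ℝ, 0 ≤ Z i i x * (t * t) + (2 * Z i j x) * t + Z j j x := by
        intro t
        have h := hquad x (max i j + 1) (fun k => if k = p then t else if k = q then 1 else 0)
        rw [twoPoint p q hpq (fun k l => Z (k : ℕ) (l : ℕ) x) t 1] at h
        have hsy : Z (q : ℕ) (p : ℕ) x = Z (p : ℕ) (q : ℕ) x := hZsymm _ _ x
        rw [hsy] at h
        have hp' : ((p : ℕ) : ℕ) = i := rfl
        have hq' : ((q : ℕ) : ℕ) = j := rfl
        simp only [p, q] at h
        nlinarith [h]
      have hd : discrim (Z i i x) (2 * Z i j x) (Z j j x) ≤ 0 := discrim_le_zero key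
      rw [discrim] at hd
      have hsq : Z i j x ^ 2 ≤ Z i i x * Z j j x := by nlinarith [hd]
      calc |Z i j x| = Real.sqrt (Z i j x ^ 2) := (Real.sqrt_sq_eq_abs _).symm
      _ ≤ Real.sqrt (Z i i x * Z j j x) := Real.sqrt_le_sqrt hsq
      _ = Real.sqrt (Z i i x) * Real.sqrt (Z j j x) := Real.sqrt_mul (hZdiag x i) _
  · -- positive semidefiniteness
    intro x N
    rw [Matrix.posSemidef_iff_dotProduct_mulVec]
    constructor
    · ext i j
      simp only [Matrix.conjTranspose_apply, Matrix.of_apply, star_trivial]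
      exact hZsymm _ _ x
    · intro v
      have h := hquad x N v
      simp only [star_trivial, dotProduct, Matrix.mulVec, Matrix.of_apply]
      calc (0 : ℝ) ≤ ∑ i : Fin N, ∑ j : Fin N, v i * v j * Z (i : ℕ) (j : ℕ) x := h
      _ = ∑ i : Fin N, v i * ∑ j : Fin N, Z (i : ℕ) (j : ℕ) x * v j := by
          refine Finset.sum_congr rfl fun i _ => ?_
          rw [Finset.mul_sum]
          exact Finset.sum_congr rfl fun j _ => by ring
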